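/- With X₂ = ∂/∂x + Σ_{i=0}^{m−1} p_{i+1} ∂/∂p_i + (1/2)p_m² ∂/∂z and X₅ = −∂/∂p_{m−2} on ℝ^{m+2} (m ≥ 2), one has (ad X₂)^{i−5} X₅ = (−1)^i ∂/∂p_{m+3−i} for all 5 ≤ i ≤ m+3, where ad X₂ denotes the Lie bracket operator Y ↦ [X₂, Y]. In particular (ad X₂)^{m−2} X₅ = (−1)^{m+3} ∂/∂p₀. -/

import Mathlib

/-- The Lie bracket of vector fields `X, Y` (viewed as maps `P → P`):
`[X,Y](q) = DY(q)(X(q)) − DX(q)(Y(q))`. -/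
noncomputable def vecBr {P : Type*} [NormedAddCommGroup P] [NormedSpace ℝ P]
    (X Y : P → P) : P → P :=
  fun q => fderiv ℝ Y q (X q) - fderiv ℝ X q (Y q)


noncomputable def shiftL (m : ℕ) : (Fin (m+1) → ℝ) →L[ℝ] (Fin (m+1) → ℝ) :=
  ContinuousLinearMap.pi (fun i => if h : i.1 < m then
    ContinuousLinearMap.proj ⟨i.1 + 1, Nat.succ_lt_succ h⟩ else 0)

noncomputable def p2 (m : ℕ) : (ℝ × (Fin (m+1) → ℝ) × ℝ) →L[ℝ] (Fin (m+1) → ℝ) :=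
  (ContinuousLinearMap.fst ℝ (Fin (m+1) → ℝ) ℝ).comp
    (ContinuousLinearMap.snd ℝ ℝ ((Fin (m+1) → ℝ) × ℝ))

lemma step_br (m : ℕ)
    (X₂ : (ℝ × (Fin (m + 1) → ℝ) × ℝ) → (ℝ × (Fin (m + 1) → ℝ) × ℝ))
    (hX₂ : X₂ = fun q => (1,
      fun i : Fin (m + 1) => if h : i.1 < m then q.2.1 ⟨i.1 + 1, Nat.succ_lt_succ h⟩ else 0,
      (1 / 2) * q.2.1 ⟨m, Nat.lt_succ_self m⟩ ^ 2))
    (j : ℕ) (hj : j + 1 < m) (a : ℝ) :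
    vecBr X₂ (fun _ => (0, Pi.single ⟨j+1, by omega⟩ a, 0)) =
      fun _ => (0, Pi.single (⟨j, by omega⟩ : Fin (m+1)) (-a), 0) := by
  have hm1 : m < m + 1 := Nat.lt_succ_self m
  set f : (ℝ × (Fin (m+1) → ℝ) × ℝ) → ℝ :=
    fun q => q.2.1 ⟨m, hm1⟩ with hf
  set C : (ℝ × (Fin (m+1) → ℝ) × ℝ) →L[ℝ] ℝ :=
    (ContinuousLinearMap.proj ⟨m, hm1⟩).comp (p2 m) with hC
  funext q
  have hfC : HasFDerivAt f C q := C.hasFDerivAt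
  have h3 : HasFDerivAt (fun q : ℝ × (Fin (m+1) → ℝ) × ℝ => (1/2 : ℝ) * f q ^ 2)
      ((1/2 : ℝ) • (f q • C + f q • C)) q := by
    have := (hfC.mul hfC).const_mul (1/2 : ℝ)
    simpa [pow_two] using this
  have h2 : HasFDerivAt (fun q : ℝ × (Fin (m+1) → ℝ) × ℝ =>
      (fun i : Fin (m + 1) => if h : i.1 < m then q.2.1 ⟨i.1 + 1, Nat.succ_lt_succ h⟩ else 0))
      ((shiftL m).comp (p2 m)) q := by
    have h := ((shiftL m).comp (p2 m)).hasFDerivAt (x := q)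
    convert h using 2 with q'
    funext i
    simp only [ContinuousLinearMap.coe_comp', Function.comp_apply, shiftL,
      ContinuousLinearMap.pi_apply, p2, ContinuousLinearMap.coe_fst',
      ContinuousLinearMap.coe_snd']
    split
    · simp
    · simp
  have hD : HasFDerivAt X₂
      (((0 : (ℝ × (Fin (m+1) → ℝ) × ℝ) →L[ℝ] ℝ)).prod
        (((shiftL m).comp (p2 m)).prod ((1/2 : ℝ) • (f q • C + f q • C)))) q := by
    rw [hX₂]
    exact HasFDerivAt.prodMk (hasFDerivAt_const (1:ℝ) q) (h2.prodMk h3)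
  set c : ℝ × (Fin (m+1) → ℝ) × ℝ := (0, Pi.single ⟨j+1, by omega⟩ a, 0) with hc
  have hYd : fderiv ℝ (fun _ : ℝ × (Fin (m+1) → ℝ) × ℝ => c) q = 0 := fderiv_const_apply c
  show fderiv ℝ (fun _ => c) q (X₂ q) - fderiv ℝ X₂ q c = _
  rw [hYd, hD.fderiv]
  have hCc : C c = 0 := by
    simp only [hC, ContinuousLinearMap.coe_comp', Function.comp_apply, p2,
      ContinuousLinearMap.coe_fst', ContinuousLinearMap.coe_snd',
      ContinuousLinearMap.proj_apply, hc]
    rw [Pi.single_apply]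
    rw [if_neg]
    intro h
    have := congrArg Fin.val h
    simp at this
    omega
  have hshift : shiftL m (Pi.single (⟨j+1, by omega⟩ : Fin (m+1)) a)
      = Pi.single (⟨j, by omega⟩ : Fin (m+1)) a := by
    funext i
    simp only [shiftL, ContinuousLinearMap.pi_apply]
    rcases Nat.lt_or_ge i.1 m with h | h
    · rw [dif_pos h]
      simp only [ContinuousLinearMap.proj_apply]
      rw [Pi.single_apply, Pi.single_apply]
      by_cases hij : i.1 = j
      · rw [if_pos, if_pos] <;> exact Fin.ext (by simp [hij])
      · rw [if_neg, if_neg]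
        · intro hh; exact hij (by have := congrArg Fin.val hh; simpa using this)
        · intro hh; have := congrArg Fin.val hh; simp at this; omega
    · rw [dif_neg (by omega)]
      rw [Pi.single_apply, if_neg]
      · simp
      · intro hh; have := congrArg Fin.val hh; simp at this; omega
  have hp2c : p2 m c = Pi.single (⟨j+1, by omega⟩ : Fin (m+1)) a := by
    simp [p2, hc]
  simp only [ContinuousLinearMap.zero_apply, zero_sub, ContinuousLinearMap.prod_apply,
    ContinuousLinearMap.coe_comp', Function.comp_apply, hp2c, hshift, hCc,
    ContinuousLinearMap.smul_apply, ContinuousLinearMap.add_apply, smul_eq_mul,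
    mul_zero, add_zero, Prod.neg_mk, neg_zero]
  rw [← Pi.single_neg]

/-- On `ℝ^{m+2}` with coordinates `(x, p₀, …, p_m, z)`, for
`X₂ = ∂/∂x + Σ p_{i+1}∂/∂p_i + (1/2)p_m²∂/∂z` and `X₅ = −∂/∂p_{m−2}` (`m ≥ 2`),
one has `(ad X₂)^{i−5} X₅ = (−1)^i ∂/∂p_{m+3−i}` for `5 ≤ i ≤ m+3`; in particular
`(ad X₂)^{m−2} X₅ = (−1)^{m+3} ∂/∂p₀`. -/
theorem adX2_iterates (m : ℕ) (hm : 2 ≤ m)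
    (X₂ X₅ : (ℝ × (Fin (m + 1) → ℝ) × ℝ) → (ℝ × (Fin (m + 1) → ℝ) × ℝ))
    (hX₂ : X₂ = fun q => (1,
      fun i : Fin (m + 1) => if h : i.1 < m then q.2.1 ⟨i.1 + 1, by omega⟩ else 0,
      (1 / 2) * q.2.1 ⟨m, Nat.lt_succ_self m⟩ ^ 2))
    (hX₅ : X₅ = fun _ => (0, -Pi.single ⟨m - 2, by omega⟩ (1 : ℝ), 0)) :
    (∀ i : ℕ, ∀ _h5 : 5 ≤ i, ∀ _h3 : i ≤ m + 3,
      (fun Y => vecBr X₂ Y)^[i - 5] X₅ = fun _ =>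
        (0, Pi.single ⟨m + 3 - i, by omega⟩ ((-1 : ℝ) ^ i), 0)) ∧
    ((fun Y => vecBr X₂ Y)^[m - 2] X₅ = fun _ =>
      (0, Pi.single ⟨0, by omega⟩ ((-1 : ℝ) ^ (m + 3)), 0)) := by
  have key : ∀ k, k ≤ m - 2 → (fun Y => vecBr X₂ Y)^[k] X₅ =
      fun _ => (0, Pi.single (⟨m - 2 - k, by omega⟩ : Fin (m+1)) ((-1 : ℝ)^(k+5)), 0) := by
    intro k
    induction k with
    | zero =>
      intro _
      simp only [Function.iterate_zero_apply, hX₅, Nat.sub_zero, zero_add]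
      norm_num [Pi.single_neg]
    | succ k ih =>
      intro hk
      rw [Function.iterate_succ_apply', ih (by omega)]
      have e1 : m - 2 - k = (m - 2 - (k+1)) + 1 := by omega
      simp only [e1]
      rw [step_br m X₂ hX₂ (m - 2 - (k+1)) (by omega) ((-1)^(k+5))]
      have e2 : (-(-1:ℝ)^(k+5)) = (-1:ℝ)^(k+1+5) := by ring
      rw [e2]
  constructor
  · intro i h5 h3
    rw [key (i-5) (by omega)]
    have e : m - 2 - (i - 5) = m + 3 - i := by omega
    have e2 : i - 5 + 5 = i := by omega
    simp only [e, e2]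
  · rw [key (m-2) le_rfl]
    have e : m - 2 - (m - 2) = 0 := by omega
    have e2 : m - 2 + 5 = m + 3 := by omega
    simp only [e, e2]
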